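/- arXiv:1304.7963 — 4 statements merged into one kernel-verified Lean document; each statement's English description precedes it below -/
import Mathlib

section
/- Let X be a nonempty compact metric space and let f, g : X → ℝ be continuous. Then osc(f+g) ≤ osc(f) + osc(g), and equality holds if and only if both argmin(f) ∩ argmin(g) ≠ ∅ and argmax(f) ∩ argmax(g) ≠ ∅. -/
open MeasureTheory Set

/-- The (attained) minimum of `f` on a nonempty compact space. -/
noncomputable def minF {X : Type*} (f : X → ℝ) : ℝ := sInf (Set.range f)

/-- The (attained) maximum of `f` on a nonempty compact space. -/
noncomputable def maxF {X : Type*} (f : X → ℝ) : ℝ := sSup (Set.range f)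

/-- The oscillation `max f - min f`. -/
noncomputable def oscF {X : Type*} (f : X → ℝ) : ℝ := maxF f - minF f

/-- `normalize f = f - min f`. -/
noncomputable def normF {X : Type*} (f : X → ℝ) : X → ℝ := fun x => f x - minF f

/-- The minimizer set of `f`. -/
def argminF {X : Type*} (f : X → ℝ) : Set X := {x | f x = minF f}

/-- The maximizer set of `f`. -/
def argmaxF {X : Type*} (f : X → ℝ) : Set X := {x | f x = maxF f}

lemma minF_le {X : Type*} [MetricSpace X] [CompactSpace X] [Nonempty X]
    (f : X → ℝ) (hf : Continuous f) (x : X) : minF f ≤ f x :=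
  csInf_le (isCompact_range hf).bddBelow (mem_range_self x)

lemma le_maxF {X : Type*} [MetricSpace X] [CompactSpace X] [Nonempty X]
    (f : X → ℝ) (hf : Continuous f) (x : X) : f x ≤ maxF f :=
  le_csSup (isCompact_range hf).bddAbove (mem_range_self x)

lemma exists_minF {X : Type*} [MetricSpace X] [CompactSpace X] [Nonempty X]
    (f : X → ℝ) (hf : Continuous f) : ∃ x, f x = minF f := by
  have := (isCompact_range hf).sInf_mem (range_nonempty f)
  exact this

lemma exists_maxF {X : Type*} [MetricSpace X] [CompactSpace X] [Nonempty X]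
    (f : X → ℝ) (hf : Continuous f) : ∃ x, f x = maxF f := by
  have := (isCompact_range hf).sSup_mem (range_nonempty f)
  exact this

theorem stmt_1 {X : Type*} [MetricSpace X] [CompactSpace X] [Nonempty X]
    (f g : X → ℝ) (hf : Continuous f) (hg : Continuous g) :
    oscF (fun x => f x + g x) ≤ oscF f + oscF g ∧
    (oscF (fun x => f x + g x) = oscF f + oscF g ↔
      (argminF f ∩ argminF g).Nonempty ∧ (argmaxF f ∩ argmaxF g).Nonempty) := by
  have hfg : Continuous fun x => f x + g x := hf.add hg
  have hmin : minF f + minF g ≤ minF (fun x => f x + g x) := by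
    apply le_csInf (range_nonempty _)
    rintro y ⟨x, rfl⟩
    exact add_le_add (minF_le f hf x) (minF_le g hg x)
  have hmax : maxF (fun x => f x + g x) ≤ maxF f + maxF g := by
    apply csSup_le (range_nonempty _)
    rintro y ⟨x, rfl⟩
    exact add_le_add (le_maxF f hf x) (le_maxF g hg x)
  have hle : oscF (fun x => f x + g x) ≤ oscF f + oscF g := by
    unfold oscF; linarith
  refine ⟨hle, ?_, ?_⟩
  · intro h
    have hmin' : minF (fun x => f x + g x) = minF f + minF g := by
      unfold oscF at h; linarith
    have hmax' : maxF (fun x => f x + g x) = maxF f + maxF g := by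
      unfold oscF at h; linarith
    constructor
    · obtain ⟨x, hx⟩ := exists_minF _ hfg
      have h1 : minF f ≤ f x := minF_le f hf x
      have h2 : minF g ≤ g x := minF_le g hg x
      have : f x + g x = minF f + minF g := hx.trans hmin'
      exact ⟨x, by simpa [argminF] using by linarith, by simpa [argminF] using by linarith⟩
    · obtain ⟨x, hx⟩ := exists_maxF _ hfg
      have h1 : f x ≤ maxF f := le_maxF f hf x
      have h2 : g x ≤ maxF g := le_maxF g hg x
      have : f x + g x = maxF f + maxF g := hx.trans hmax'
      exact ⟨x, by simpa [argmaxF] using by linarith, by simpa [argmaxF] using by linarith⟩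
  · rintro ⟨⟨x, hx1, hx2⟩, ⟨y, hy1, hy2⟩⟩
    have hx1' : f x = minF f := hx1
    have hx2' : g x = minF g := hx2
    have hy1' : f y = maxF f := hy1
    have hy2' : g y = maxF g := hy2
    have h1 : minF (fun x => f x + g x) ≤ minF f + minF g := by
      have := minF_le (fun x => f x + g x) hfg x
      linarith
    have h2 : maxF f + maxF g ≤ maxF (fun x => f x + g x) := by
      have := le_maxF (fun x => f x + g x) hfg y
      linarith
    unfold oscF; linarith
end

section
/- Let X be a nonempty compact metric space and u, w : X → ℝ continuous with min u = 0, max u = l > 0 and min w = 0. For t ∈ [0,1] set h_t := min(t·l, u) + w. Then for every t ∈ [0,1], osc(h_t) ≤ max(osc(w), osc(u+w)). -/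
open MeasureTheory Set

theorem stmt_9 {X : Type*} [MetricSpace X] [CompactSpace X] [Nonempty X]
    (u w : X → ℝ) (hu : Continuous u) (hw : Continuous w)
    (l : ℝ) (hl : 0 < l) (humin : minF u = 0) (humax : maxF u = l)
    (hwmin : minF w = 0) :
    ∀ t ∈ Set.Icc (0:ℝ) 1,
      oscF (fun x => min (t * l) (u x) + w x) ≤
        max (oscF w) (oscF (fun x => u x + w x)) := by
  intro t ht
  set h : X → ℝ := fun x => min (t * l) (u x) + w x with hh
  have hch : Continuous h := (continuous_const.min hu).add hw
  have hrc : IsCompact (Set.range h) := isCompact_range hch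
  have hrn : (Set.range h).Nonempty := Set.range_nonempty _
  obtain ⟨x0, hx0⟩ := hrc.sSup_mem hrn
  obtain ⟨x1, hx1⟩ := hrc.sInf_mem hrn
  have hwd : ∀ x y : X, w x - w y ≤ oscF w := by
    intro x y
    have h1 : w x ≤ sSup (Set.range w) :=
      le_csSup (isCompact_range hw).bddAbove ⟨x, rfl⟩
    have h2 : sInf (Set.range w) ≤ w y :=
      csInf_le (isCompact_range hw).bddBelow ⟨y, rfl⟩
    simp only [oscF, maxF, minF]
    linarith
  have huwd : ∀ x y : X, (u x + w x) - (u y + w y) ≤ oscF (fun x => u x + w x) := by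
    intro x y
    have hc : Continuous fun x => u x + w x := hu.add hw
    have h1 : u x + w x ≤ sSup (Set.range fun x => u x + w x) :=
      le_csSup (isCompact_range hc).bddAbove ⟨x, rfl⟩
    have h2 : sInf (Set.range fun x => u x + w x) ≤ u y + w y :=
      csInf_le (isCompact_range hc).bddBelow ⟨y, rfl⟩
    simp only [oscF, maxF, minF]
    linarith
  have key : h x0 - h x1 ≤ max (oscF w) (oscF (fun x => u x + w x)) := by
    by_cases hc : t * l ≤ u x1
    · have e1 : min (t * l) (u x1) = t * l := min_eq_left hc
      have e2 : min (t * l) (u x0) ≤ t * l := min_le_left _ _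
      have : h x0 - h x1 ≤ w x0 - w x1 := by simp only [hh, e1]; linarith
      exact le_trans this (le_trans (hwd x0 x1) (le_max_left _ _))
    · push_neg at hc
      have e1 : min (t * l) (u x1) = u x1 := min_eq_right hc.le
      have e2 : min (t * l) (u x0) ≤ u x0 := min_le_right _ _
      have : h x0 - h x1 ≤ (u x0 + w x0) - (u x1 + w x1) := by
        simp only [hh, e1]; linarith
      exact le_trans this (le_trans (huwd x0 x1) (le_max_right _ _))
  have : oscF h = h x0 - h x1 := by
    simp only [oscF, maxF, minF, hx0, hx1]
  rw [this]
  exact key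
end

section
/- Let X be a nonempty compact metric space and p, q : X → ℝ continuous with p ≥ 0, q ≥ 0, min p = 0 and min q = 0. Then argmax(p) ∪ argmin(q) = X if and only if p(x) = min(max p, p(x) + q(x)) for every x ∈ X. -/
open MeasureTheory Set

theorem stmt_11 {X : Type*} [MetricSpace X] [CompactSpace X] [Nonempty X]
    (p q : X → ℝ) (hp : Continuous p) (hq : Continuous q)
    (hp0 : ∀ x, 0 ≤ p x) (hq0 : ∀ x, 0 ≤ q x)
    (hpmin : minF p = 0) (hqmin : minF q = 0) :
    (argmaxF p ∪ argminF q) = Set.univ ↔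
      ∀ x : X, p x = min (maxF p) (p x + q x) := by
  have hb : BddAbove (Set.range p) := (isCompact_range hp).bddAbove
  have hle : ∀ x, p x ≤ maxF p := fun x => le_csSup hb ⟨x, rfl⟩
  constructor
  · intro h x
    have hx : x ∈ argmaxF p ∪ argminF q := h ▸ Set.mem_univ x
    rcases hx with hx | hx
    · rw [hx]
      exact (min_eq_left (by linarith [hq0 x, hle x, hx.symm])).symm
    · have : q x = 0 := by rw [hx, hqmin]
      rw [this, add_zero, min_eq_right (hle x)]
  · intro h
    apply Set.eq_univ_of_forall
    intro x
    have := h x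
    rcases min_cases (maxF p) (p x + q x) with ⟨h1, _⟩ | ⟨h1, h2⟩
    · left; exact this.trans h1
    · right
      have : q x = 0 := by rw [h1] at this; linarith
      simp [argminF, this, hqmin]
end

section
/- Let X be a nonempty compact metric space and μ a finite Borel measure on X with full support (μ(U) > 0 for every nonempty open U ⊆ X). Let u, w : X → ℝ be continuous with min u = 0, max u = l > 0 and min w = 0. For t ∈ [0,1] set h_t := min(t·l, u) + w and g(t) := ∫_X normalize(h_t) dμ. Then the following are equivalent: (i) g(0) ≤ g(t) for all t ∈ [0,1]; (ii) argmin(u) ∩ argmin(w) ≠ ∅; (iii) ∫_X normalize(u+w) dμ = ∫_X normalize(u) dμ + ∫_X normalize(w) dμ. -/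
open MeasureTheory Set

section Aux

variable {X : Type*} [TopologicalSpace X] [CompactSpace X] [Nonempty X]

lemma aux_minF_le {f : X → ℝ} (hf : Continuous f) (y : X) : minF f ≤ f y :=
  csInf_le (isCompact_range hf).bddBelow (mem_range_self y)

lemma aux_exists_minF {f : X → ℝ} (hf : Continuous f) : ∃ x, f x = minF f := by
  obtain ⟨x, -, hx⟩ := isCompact_univ.exists_isMinOn univ_nonempty hf.continuousOn
  refine ⟨x, le_antisymm ?_ (aux_minF_le hf x)⟩
  exact le_csInf (range_nonempty f) (by rintro b ⟨y, rfl⟩; exact hx (mem_univ y))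

lemma aux_le_maxF {f : X → ℝ} (hf : Continuous f) (y : X) : f y ≤ maxF f :=
  le_csSup (isCompact_range hf).bddAbove (mem_range_self y)

lemma aux_minF_eq_zero {f : X → ℝ} (hnn : ∀ y, 0 ≤ f y) {x : X} (hx : f x = 0) :
    minF f = 0 := by
  refine le_antisymm ?_ (le_csInf (range_nonempty f) (by rintro b ⟨y, rfl⟩; exact hnn y))
  exact hx ▸ csInf_le ⟨0, by rintro b ⟨y, rfl⟩; exact hnn y⟩ (mem_range_self x)

end Aux

lemma aux_integrable {X : Type*} [MetricSpace X] [CompactSpace X] [MeasurableSpace X]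
    [BorelSpace X] (μ : Measure X) [IsFiniteMeasure μ] {f : X → ℝ} (hf : Continuous f) :
    Integrable f μ :=
  hf.integrable_of_hasCompactSupport (HasCompactSupport.of_compactSpace f)

theorem stmt_15 {X : Type*} [MetricSpace X] [CompactSpace X] [Nonempty X]
    [MeasurableSpace X] [BorelSpace X]
    (μ : Measure X) [IsFiniteMeasure μ]
    (hfull : ∀ U : Set X, IsOpen U → U.Nonempty → 0 < μ U)
    (u w : X → ℝ) (hu : Continuous u) (hw : Continuous w)
    (l : ℝ) (hl : 0 < l) (humin : minF u = 0) (humax : maxF u = l)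
    (hwmin : minF w = 0) :
    ((∀ t ∈ Set.Icc (0:ℝ) 1,
        (∫ x, normF (fun x => min ((0:ℝ) * l) (u x) + w x) x ∂μ) ≤
          ∫ x, normF (fun x => min (t * l) (u x) + w x) x ∂μ) ↔
      (argminF u ∩ argminF w).Nonempty) ∧
    ((∀ t ∈ Set.Icc (0:ℝ) 1,
        (∫ x, normF (fun x => min ((0:ℝ) * l) (u x) + w x) x ∂μ) ≤
          ∫ x, normF (fun x => min (t * l) (u x) + w x) x ∂μ) ↔
      (∫ x, normF (fun x => u x + w x) x ∂μ) =
        (∫ x, normF u x ∂μ) + ∫ x, normF w x ∂μ) := by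
  have hu0 : ∀ x, 0 ≤ u x := fun x => humin ▸ aux_minF_le hu x
  have hw0 : ∀ x, 0 ≤ w x := fun x => hwmin ▸ aux_minF_le hw x
  have int_u : Integrable u μ := aux_integrable μ hu
  have int_w : Integrable w μ := aux_integrable μ hw
  have cont_ht : ∀ t : ℝ, Continuous (fun x => min (t * l) (u x) + w x) :=
    fun t => (continuous_const.min hu).add hw
  have int_ht : ∀ t : ℝ, Integrable (fun x => min (t * l) (u x) + w x) μ :=
    fun t => aux_integrable μ (cont_ht t)
  -- the t = 0 function equals w
  have h0w : (fun x => min ((0:ℝ) * l) (u x) + w x) = w := by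
    funext x; rw [zero_mul, min_eq_left (hu0 x), zero_add]
  have hLHS : (∫ x, normF (fun x => min ((0:ℝ) * l) (u x) + w x) x ∂μ) = ∫ x, w x ∂μ := by
    rw [h0w]; simp [normF, hwmin]
  have hMpos : 0 < (μ univ).toReal :=
    ENNReal.toReal_pos (hfull univ isOpen_univ univ_nonempty).ne' (measure_ne_top μ univ)
  set M := (μ univ).toReal with hM
  set P : Prop := (∀ t ∈ Set.Icc (0:ℝ) 1,
      (∫ x, normF (fun x => min ((0:ℝ) * l) (u x) + w x) x ∂μ) ≤
        ∫ x, normF (fun x => min (t * l) (u x) + w x) x ∂μ) with hPdef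
  set Q : Prop := (argminF u ∩ argminF w).Nonempty with hQdef
  -- Q → P
  have hQP : Q → P := by
    rintro ⟨x₀, hx₀u, hx₀w⟩ t ⟨ht0, _⟩
    have hx₀u' : u x₀ = 0 := by rw [hx₀u, humin]
    have hx₀w' : w x₀ = 0 := by rw [hx₀w, hwmin]
    have hnn : ∀ y, 0 ≤ min (t * l) (u y) + w y := fun y =>
      add_nonneg (le_min (mul_nonneg ht0 hl.le) (hu0 y)) (hw0 y)
    have hmt : minF (fun x => min (t * l) (u x) + w x) = 0 := by
      refine aux_minF_eq_zero hnn (x := x₀) ?_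
      rw [hx₀u', hx₀w', min_eq_right (mul_nonneg ht0 hl.le), add_zero]
    rw [hLHS]
    have : (∫ x, normF (fun x => min (t * l) (u x) + w x) x ∂μ)
        = ∫ x, (min (t * l) (u x) + w x) ∂μ := by simp [normF, hmt]
    rw [this]
    exact integral_mono int_w (int_ht t)
      (fun x => le_add_of_nonneg_left (le_min (mul_nonneg ht0 hl.le) (hu0 x)))
  -- Q → R
  have hQR : Q → ((∫ x, normF (fun x => u x + w x) x ∂μ) =
      (∫ x, normF u x ∂μ) + ∫ x, normF w x ∂μ) := by
    rintro ⟨x₀, hx₀u, hx₀w⟩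
    have hx₀u' : u x₀ = 0 := by rw [hx₀u, humin]
    have hx₀w' : w x₀ = 0 := by rw [hx₀w, hwmin]
    have hmt : minF (fun x => u x + w x) = 0 := by
      refine aux_minF_eq_zero (fun y => add_nonneg (hu0 y) (hw0 y)) (x := x₀) ?_
      rw [hx₀u', hx₀w', add_zero]
    simp only [normF, hmt, humin, hwmin, sub_zero]
    exact integral_add int_u int_w
  -- ¬Q → ¬P
  have hnQnP : ¬Q → ¬P := by
    intro hnQ
    -- get c = min of u on {w = 0}, positive
    obtain ⟨xw, hxw⟩ := aux_exists_minF hw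
    have hxw0 : w xw = 0 := by rw [hxw, hwmin]
    have hScl : IsClosed {x | w x = 0} := isClosed_eq hw continuous_const
    obtain ⟨xc, hxcS, hxc⟩ := hScl.isCompact.exists_isMinOn ⟨xw, hxw0⟩ hu.continuousOn
    set c := u xc with hc_def
    have hc : 0 < c := by
      rcases lt_or_eq_of_le (hu0 xc) with h | h
      · exact h
      · exact absurd ⟨xc, by simp [argminF, humin, ← h], by simp [argminF, hwmin, hxcS]⟩ hnQ
    have hcmin : ∀ x, w x = 0 → c ≤ u x := fun x hx => hxc hx
    -- get β = min of w on {u ≤ c/2}, positive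
    obtain ⟨xu, hxu⟩ := aux_exists_minF hu
    have hxu0 : u xu = 0 := by rw [hxu, humin]
    have hKcl : IsClosed {x | u x ≤ c / 2} := isClosed_le hu continuous_const
    have hxuK : xu ∈ {x | u x ≤ c / 2} := by
      simp only [mem_setOf_eq, hxu0]; positivity
    obtain ⟨xb, hxbK, hxb⟩ := hKcl.isCompact.exists_isMinOn ⟨xu, hxuK⟩ hw.continuousOn
    set β := w xb with hβ_def
    have hβ : 0 < β := by
      rcases lt_or_eq_of_le (hw0 xb) with h | h
      · exact h
      · have : c ≤ u xb := hcmin xb h.symm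
        have : u xb ≤ c / 2 := hxbK
        linarith
    -- choose t
    set t := min 1 (min (c / 2) β / l) with ht_def
    have ht0 : 0 < t := lt_min one_pos (div_pos (lt_min (by linarith) hβ) hl)
    have ht1 : t ≤ 1 := min_le_left _ _
    have htl : t * l ≤ min (c / 2) β := by
      calc t * l ≤ (min (c / 2) β / l) * l :=
            mul_le_mul_of_nonneg_right (min_le_right _ _) hl.le
        _ = min (c / 2) β := div_mul_cancel₀ _ hl.ne'
    have htl_pos : 0 < t * l := mul_pos ht0 hl
    -- lower bound on h_t
    have hlow : ∀ x, t * l ≤ min (t * l) (u x) + w x := by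
      intro x
      by_cases hx : u x ≤ c / 2
      · have hwx : β ≤ w x := hxb hx
        have : t * l ≤ w x := le_trans (le_trans htl (min_le_right _ _)) hwx
        have hmin0 : 0 ≤ min (t * l) (u x) := le_min htl_pos.le (hu0 x)
        linarith
      · push_neg at hx
        have : t * l ≤ u x := le_trans (le_trans htl (min_le_left _ _)) hx.le
        rw [min_eq_left this]
        have := hw0 x
        linarith
    have hmt : t * l ≤ minF (fun x => min (t * l) (u x) + w x) :=
      le_csInf (range_nonempty _) (by rintro b ⟨y, rfl⟩; exact hlow y)
    -- compute g(t)
    have hg : (∫ x, normF (fun x => min (t * l) (u x) + w x) x ∂μ)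
        = (∫ x, (min (t * l) (u x) + w x) ∂μ)
          - M * minF (fun x => min (t * l) (u x) + w x) := by
      simp only [normF]
      rw [integral_sub (int_ht t) (integrable_const _), integral_const, smul_eq_mul]
      rfl
    -- strict inequality: ∫ min(tl,u) < M * (t*l)
    have hstrict : (∫ x, min (t * l) (u x) ∂μ) < M * (t * l) := by
      have int_min : Integrable (fun x => min (t * l) (u x)) μ :=
        aux_integrable μ (continuous_const.min hu)
      have int_f : Integrable (fun x => t * l - min (t * l) (u x)) μ :=
        (integrable_const _).sub int_min
      have hfnn : ∀ x, 0 ≤ t * l - min (t * l) (u x) := fun x =>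
        sub_nonneg.mpr (min_le_left _ _)
      have hsupp : {x | u x < t * l} ⊆ Function.support (fun x => t * l - min (t * l) (u x)) := by
        intro x hx
        simp only [Function.mem_support]
        rw [min_eq_right (le_of_lt hx)]
        have : u x < t * l := hx
        intro h; linarith [sub_eq_zero.mp h]
      have hopen : IsOpen {x | u x < t * l} := isOpen_lt hu continuous_const
      have hne : ({x | u x < t * l} : Set X).Nonempty := ⟨xu, by simpa [hxu0] using htl_pos⟩
      have hμs : 0 < μ (Function.support (fun x => t * l - min (t * l) (u x))) :=
        lt_of_lt_of_le (hfull _ hopen hne) (measure_mono hsupp)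
      have hpos : 0 < ∫ x, (t * l - min (t * l) (u x)) ∂μ :=
        (integral_pos_iff_support_of_nonneg hfnn int_f).mpr hμs
      have : (∫ x, (t * l - min (t * l) (u x)) ∂μ)
          = M * (t * l) - ∫ x, min (t * l) (u x) ∂μ := by
        rw [integral_sub (integrable_const _) int_min, integral_const, smul_eq_mul]
        rfl
      linarith
    -- conclude g(t) < g(0)
    intro hP
    have hPt := hP t ⟨ht0.le, ht1⟩
    rw [hLHS, hg] at hPt
    have hsplit : (∫ x, (min (t * l) (u x) + w x) ∂μ)
        = (∫ x, min (t * l) (u x) ∂μ) + ∫ x, w x ∂μ :=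
      integral_add (aux_integrable μ (continuous_const.min hu)) int_w
    have hMul : M * (t * l) ≤ M * minF (fun x => min (t * l) (u x) + w x) :=
      mul_le_mul_of_nonneg_left hmt hMpos.le
    rw [hsplit] at hPt
    linarith
  -- ¬Q → ¬R
  have hnQnR : ¬Q → ¬((∫ x, normF (fun x => u x + w x) x ∂μ) =
      (∫ x, normF u x ∂μ) + ∫ x, normF w x ∂μ) := by
    intro hnQ
    obtain ⟨xm, hxm⟩ : ∃ x, u x + w x = minF (fun x => u x + w x) := aux_exists_minF (hu.add hw)
    set m := minF (fun x => u x + w x) with hm_def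
    have hm0 : 0 ≤ m := by
      rw [← hxm]; exact add_nonneg (hu0 xm) (hw0 xm)
    have hmpos : 0 < m := by
      rcases lt_or_eq_of_le hm0 with h | h
      · exact h
      · exfalso
        have hsum : u xm + w xm = 0 := by rw [hxm, ← h]
        have hum : u xm = 0 := by linarith [hu0 xm, hw0 xm]
        have hwm : w xm = 0 := by linarith [hu0 xm, hw0 xm]
        exact hnQ ⟨xm, by simp [argminF, humin, hum], by simp [argminF, hwmin, hwm]⟩
    have hgt : (∫ x, normF (fun x => u x + w x) x ∂μ)
        = (∫ x, (u x + w x) ∂μ) - M * m := by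
      simp only [normF, ← hm_def]
      rw [integral_sub (aux_integrable μ (f := fun x => u x + w x) (hu.add hw)) (integrable_const _),
        integral_const, smul_eq_mul]
      rfl
    intro hR
    rw [hgt] at hR
    simp only [normF, humin, hwmin, sub_zero] at hR
    rw [integral_add int_u int_w] at hR
    nlinarith [mul_pos hMpos hmpos]
  have hPQ : P ↔ Q := ⟨fun hp => by_contra fun hq => hnQnP hq hp, hQP⟩
  exact ⟨hPQ, hPQ.trans ⟨hQR, fun hR => by_contra fun hq => hnQnR hq hR⟩⟩
end
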